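/- arXiv:2409.20051 — 2 statements merged into one kernel-verified Lean document; each statement's English description precedes it below -/
import Mathlib

section
/- Let σ : Sym⁺⁺(3) → Sym(3) be isotropic and Fréchet differentiable. Let V : ℝ → Sym⁺⁺(3) and R : ℝ → O(3) be differentiable at t₀, set F(t) = V(t) R(t), B(t) = V(t)², L = F'(t₀) F(t₀)⁻¹, D = sym L, Ω = R'(t₀) R(t₀)ᵀ, and B₀ = B(t₀). Then the Green–Naghdi rate of σ(B(t)) at t₀ satisfies (d/dt)[σ(B(t))]|_{t₀} + σ(B₀) Ω − Ω σ(B₀) = 2 · Dσ(B₀).(V(t₀) D V(t₀)). -/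
open Matrix

noncomputable section

abbrev M3 := Matrix (Fin 3) (Fin 3) ℝ

attribute [local instance] Matrix.frobeniusNormedAddCommGroup Matrix.frobeniusNormedSpace

attribute [local instance] Matrix.frobeniusNormedRing Matrix.frobeniusNormedAlgebra

open NormedSpace in
def tCLM : M3 →L[ℝ] M3 :=
  LinearMap.toContinuousLinearMap (Matrix.transposeLinearEquiv (Fin 3) (Fin 3) ℝ ℝ).toLinearMap

@[simp] lemma tCLM_apply (A : M3) : tCLM A = Aᵀ := rfl

lemma hasDerivAt_transpose {f : ℝ → M3} {f' : M3} {x : ℝ} (h : HasDerivAt f f' x) :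
    HasDerivAt (fun t => (f t)ᵀ) f'ᵀ x := by
  exact tCLM.hasFDerivAt.comp_hasDerivAt x h

open NormedSpace in
lemma exp_transpose' (A : M3) : NormedSpace.exp Aᵀ = (NormedSpace.exp A)ᵀ := by
  simp only [exp_eq_tsum ℝ]
  have hs : Summable (fun n : ℕ => ((n.factorial : ℕ) : ℝ)⁻¹ • A ^ n) := expSeries_summable' A
  calc (∑' n : ℕ, ((n.factorial : ℕ) : ℝ)⁻¹ • Aᵀ ^ n)
      = ∑' n : ℕ, tCLM (((n.factorial : ℕ) : ℝ)⁻¹ • A ^ n) := by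
        congr 1; ext n; simp [Matrix.transpose_pow]
    _ = tCLM (∑' n : ℕ, ((n.factorial : ℕ) : ℝ)⁻¹ • A ^ n) := (tCLM.map_tsum hs).symm
    _ = (∑' n : ℕ, ((n.factorial : ℕ) : ℝ)⁻¹ • A ^ n)ᵀ := rfl

open NormedSpace in
lemma exp_orth {Ω : M3} (hskew : Ωᵀ = -Ω) (s : ℝ) :
    (NormedSpace.exp (s • Ω))ᵀ * NormedSpace.exp (s • Ω) = 1 := by
  rw [← exp_transpose', Matrix.transpose_smul, hskew, smul_neg,
    ← Matrix.exp_add_of_commute (-(s • Ω)) (s • Ω) (Commute.neg_left rfl), neg_add_cancel, exp_zero]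

lemma posDef_conj {Q B : M3} (hQ : IsUnit Q.det) (hB : B.PosDef) : (Q * B * Qᵀ).PosDef := by
  have := hB.mul_mul_conjTranspose_same (B := Q)
    (Matrix.vecMul_injective_iff_isUnit.mpr ((Matrix.isUnit_iff_isUnit_det Q).mpr hQ))
  rwa [Matrix.conjTranspose_eq_transpose_of_trivial] at this

open NormedSpace in
lemma key_iso (σ : M3 → M3)
    (hiso : ∀ (Q X : M3), Qᵀ * Q = 1 → X.PosDef → σ (Q * X * Qᵀ) = Q * σ X * Qᵀ)
    {B₀ : M3} (hB : B₀.PosDef)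
    (T : M3 →L[ℝ] M3) (hT : HasFDerivWithinAt σ T {X : M3 | X.PosDef} B₀)
    {Ω : M3} (hskew : Ωᵀ = -Ω) :
    T (Ω * B₀ - B₀ * Ω) = Ω * σ B₀ - σ B₀ * Ω := by
  set Q : ℝ → M3 := fun s => NormedSpace.exp (s • Ω) with hQdef
  have hQorth : ∀ s, (Q s)ᵀ * Q s = 1 := fun s => exp_orth hskew s
  have hQ0 : Q 0 = 1 := by simp [hQdef]
  have hQd : HasDerivAt Q Ω 0 := by
    have h := hasDerivAt_exp_smul_const (𝕂 := ℝ) Ω 0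
    rw [zero_smul, exp_zero, one_mul] at h
    exact h
  have hQTd : HasDerivAt (fun s => (Q s)ᵀ) (-Ω) 0 := by
    have := hasDerivAt_transpose hQd; rwa [hskew] at this
  have hdet : ∀ s, IsUnit (Q s).det := by
    intro s
    have h1 := congrArg Matrix.det (hQorth s)
    rw [Matrix.det_mul, Matrix.det_one] at h1
    exact IsUnit.of_mul_eq_one _ ((mul_comm _ _).trans h1)
  have hmem : ∀ s, Q s * B₀ * (Q s)ᵀ ∈ {X : M3 | X.PosDef} := fun s =>
    posDef_conj (hdet s) hB
  have hcder : HasDerivAt (fun s => Q s * B₀ * (Q s)ᵀ) (Ω * B₀ - B₀ * Ω) 0 := by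
    have h1 : HasDerivAt (fun s => Q s * B₀) (Ω * B₀) 0 := hQd.mul_const B₀
    have h2 := h1.mul hQTd
    have h3 : Ω * B₀ * (Q 0)ᵀ + Q 0 * B₀ * -Ω = Ω * B₀ - B₀ * Ω := by
      rw [hQ0]; simp [mul_neg, sub_eq_add_neg]
    rwa [h3] at h2
  have hLd : HasDerivAt (fun s => σ (Q s * B₀ * (Q s)ᵀ)) (T (Ω * B₀ - B₀ * Ω)) 0 := by
    have hTw : HasFDerivWithinAt σ T {X : M3 | X.PosDef} (Q 0 * B₀ * (Q 0)ᵀ) := by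
      rw [hQ0]; simpa using hT
    have := hTw.comp_hasDerivWithinAt (s := Set.univ) 0 hcder.hasDerivWithinAt (fun s _ => hmem s)
    rw [hasDerivWithinAt_univ] at this
    exact this
  have hRd : HasDerivAt (fun s => Q s * σ B₀ * (Q s)ᵀ) (Ω * σ B₀ - σ B₀ * Ω) 0 := by
    have h1 : HasDerivAt (fun s => Q s * σ B₀) (Ω * σ B₀) 0 := hQd.mul_const (σ B₀)
    have h2 := h1.mul hQTd
    have h3 : Ω * σ B₀ * (Q 0)ᵀ + Q 0 * σ B₀ * -Ω = Ω * σ B₀ - σ B₀ * Ω := by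
      rw [hQ0]; simp [mul_neg, sub_eq_add_neg]
    rwa [h3] at h2
  have heq : (fun s => σ (Q s * B₀ * (Q s)ᵀ)) = fun s => Q s * σ B₀ * (Q s)ᵀ :=
    funext fun s => hiso (Q s) B₀ (hQorth s) hB
  exact (heq ▸ hLd).unique hRd

/-- Formula for the Green–Naghdi rate: for an isotropic, Fréchet
differentiable `σ : Sym⁺⁺(3) → Sym(3)` and a differentiable polar decomposition
`F = V R` (`V` positive definite symmetric, `R` orthogonal), with `B = V²`,
`L = F' F⁻¹`, `D = sym L`, `Ω = R' Rᵀ`, one has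
`(d/dt)[σ(B(t))] + σ(B₀) Ω − Ω σ(B₀) = 2 Dσ(B₀).(V D V)`. -/
theorem green_naghdi_formula
    (σ : M3 → M3)
    (hmaps : ∀ X : M3, X.PosDef → (σ X).IsSymm)
    (hiso : ∀ (Q X : M3), Qᵀ * Q = 1 → X.PosDef → σ (Q * X * Qᵀ) = Q * σ X * Qᵀ)
    (V : ℝ → M3) (hVpos : ∀ t, (V t).PosDef)
    (R : ℝ → M3) (hRorth : ∀ t, (R t)ᵀ * R t = 1)
    (t₀ : ℝ) (V' R' F' : M3)
    (hV : HasDerivAt V V' t₀) (hR : HasDerivAt R R' t₀)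
    (hF : HasDerivAt (fun t => V t * R t) F' t₀)
    (T : M3 →L[ℝ] M3)
    (hT : HasFDerivWithinAt σ T {X : M3 | X.PosDef} (V t₀ * V t₀))
    (L D Ω B₀ : M3)
    (hL : L = F' * (V t₀ * R t₀)⁻¹)
    (hD : D = (1 / 2 : ℝ) • (L + Lᵀ))
    (hΩ : Ω = R' * (R t₀)ᵀ)
    (hB₀ : B₀ = V t₀ * V t₀) :
    HasDerivAt (fun t => σ (V t * V t))
      ((2 : ℝ) • T (V t₀ * D * V t₀) - σ B₀ * Ω + Ω * σ B₀) t₀ := by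
  have hVsymm : ∀ t, (V t)ᵀ = V t := fun t => by
    have h := (hVpos t).1.eq
    rwa [Matrix.conjTranspose_eq_transpose_of_trivial] at h
  have hV'symm : V'ᵀ = V' := by
    have h1 := hasDerivAt_transpose hV
    have h2 : (fun t => (V t)ᵀ) = V := funext hVsymm
    exact (h2 ▸ h1).unique hV
  have hRRT : R t₀ * (R t₀)ᵀ = 1 := mul_eq_one_comm.mp (hRorth t₀)
  have hΩskew : Ωᵀ = -Ω := by
    have hfun : (fun t => R t * (R t)ᵀ) = fun _ => (1 : M3) :=
      funext fun t => mul_eq_one_comm.mp (hRorth t)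
    have hd : HasDerivAt (fun t => R t * (R t)ᵀ) (R' * (R t₀)ᵀ + R t₀ * R'ᵀ) t₀ :=
      hR.mul (hasDerivAt_transpose hR)
    have hz : HasDerivAt (fun _ : ℝ => (1 : M3)) 0 t₀ := hasDerivAt_const _ _
    have h0 := (hfun ▸ hd).unique hz
    rw [hΩ, Matrix.transpose_mul, Matrix.transpose_transpose]
    exact eq_neg_of_add_eq_zero_right h0
  have hVdet : IsUnit (V t₀).det := isUnit_iff_ne_zero.mpr (hVpos t₀).det_pos.ne'
  have hVinv : (V t₀)⁻¹ * V t₀ = 1 := Matrix.nonsing_inv_mul _ hVdet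
  have hVinv' : V t₀ * (V t₀)⁻¹ = 1 := Matrix.mul_nonsing_inv _ hVdet
  have hF' : F' = V' * R t₀ + V t₀ * R' := hF.unique (hV.mul hR)
  have hRinv : (R t₀)⁻¹ = (R t₀)ᵀ := Matrix.inv_eq_left_inv (hRorth t₀)
  have hLval : L = V' * (V t₀)⁻¹ + V t₀ * Ω * (V t₀)⁻¹ := by
    rw [hL, hF', Matrix.mul_inv_rev, hRinv, hΩ, add_mul]
    congr 1
    · rw [mul_assoc, ← mul_assoc (R t₀), hRRT, one_mul]
    · simp only [Matrix.mul_assoc]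
  have hVinvsymm : ((V t₀)⁻¹)ᵀ = (V t₀)⁻¹ := by
    rw [Matrix.transpose_nonsing_inv, hVsymm]
  have hLtval : Lᵀ = (V t₀)⁻¹ * V' + (V t₀)⁻¹ * -Ω * V t₀ := by
    rw [hLval]
    simp only [Matrix.transpose_add, Matrix.transpose_mul, hVinvsymm, hV'symm, hΩskew,
      hVsymm t₀, Matrix.mul_assoc]
  have hVLV : V t₀ * L * V t₀ = V t₀ * V' + B₀ * Ω := by
    rw [hLval, hB₀]
    simp only [mul_add, add_mul, Matrix.mul_assoc, hVinv, mul_one, Matrix.mul_one]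
  have hVLtV : V t₀ * Lᵀ * V t₀ = V' * V t₀ - Ω * B₀ := by
    rw [hLtval, hB₀]
    simp only [mul_add, add_mul, ← Matrix.mul_assoc, hVinv', one_mul, Matrix.one_mul,
      neg_mul, mul_neg, sub_eq_add_neg]
  have hsmul : (2:ℝ) • (V t₀ * D * V t₀) = V t₀ * (L + Lᵀ) * V t₀ := by
    rw [hD, Matrix.mul_smul, Matrix.smul_mul, smul_smul]
    norm_num
  have hB₀pos : B₀.PosDef := by
    have h1 : V t₀ * 1 * (V t₀)ᵀ = V t₀ * V t₀ := by rw [mul_one, hVsymm t₀]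
    rw [hB₀, ← h1]
    exact posDef_conj hVdet Matrix.PosDef.one
  have hT' : HasFDerivWithinAt σ T {X : M3 | X.PosDef} B₀ := by rw [hB₀]; exact hT
  have hkeyT : T (Ω * B₀ - B₀ * Ω) = Ω * σ B₀ - σ B₀ * Ω :=
    key_iso σ hiso hB₀pos T hT' hΩskew
  have hsq : ∀ t, (V t * V t).PosDef := fun t => by
    have h1 : V t * 1 * (V t)ᵀ = V t * V t := by rw [mul_one, hVsymm t]
    rw [← h1]
    exact posDef_conj (isUnit_iff_ne_zero.mpr (hVpos t).det_pos.ne') Matrix.PosDef.one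
  have hcomp : HasDerivAt (fun t => σ (V t * V t)) (T (V' * V t₀ + V t₀ * V')) t₀ := by
    have hBd : HasDerivAt (fun t => V t * V t) (V' * V t₀ + V t₀ * V') t₀ := hV.mul hV
    have := hT.comp_hasDerivWithinAt (s := Set.univ) t₀ hBd.hasDerivWithinAt (fun t _ => hsq t)
    rw [hasDerivWithinAt_univ] at this
    exact this
  have harg : V' * V t₀ + V t₀ * V' = (2:ℝ) • (V t₀ * D * V t₀) + (Ω * B₀ - B₀ * Ω) := by
    rw [hsmul, mul_add, add_mul, hVLV, hVLtV]
    abel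
  have hfinal : T (V' * V t₀ + V t₀ * V')
      = (2 : ℝ) • T (V t₀ * D * V t₀) - σ B₀ * Ω + Ω * σ B₀ := by
    rw [harg, map_add, T.map_smul, hkeyT]
    abel
  exact hfinal ▸ hcomp
end
end

section
/- Monotonicity in the logarithmic strain does not imply monotonicity in the stretch: let μ, λ > 0 satisfy 2 μ (2 log 18 − (1/3) log 6) < (λ/3) log 2, and define the Hencky stress σ(V) = 2 μ log V + λ tr(log V) · 𝟙 for V ∈ Sym⁺⁺(3). Then for V₁ = diag(3, 1/3, 1) and V₂ = diag(1, 2, 1) one has ⟨σ(V₁) − σ(V₂), V₁ − V₂⟩ < 0; in particular V ↦ σ(V) is not Hilbert-monotone in V, although X ↦ 2 μ X + λ tr(X) 𝟙 is strictly Hilbert-monotone in X = log V. -/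
open Matrix

noncomputable section

open scoped Classical

/-- The principal matrix logarithm on `Sym⁺⁺(3)`: for positive definite symmetric `B`,
`matrixLog B` is the unique symmetric matrix `X` with `exp X = B` (junk value otherwise). -/
noncomputable def matrixLog (B : M3) : M3 :=
  if h : ∃ X : M3, X.IsSymm ∧ NormedSpace.exp X = B then h.choose else 0

lemma symm_selfAdjoint {X : M3} (hX : X.IsSymm) : IsSelfAdjoint X := by
  show star X = X
  rw [Matrix.star_eq_conjTranspose]
  ext i j
  simpa [Matrix.conjTranspose_apply] using congrFun (congrFun hX i) j

lemma exp_inj_symm {X Y : M3} (hX : X.IsSymm) (hY : Y.IsSymm)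
    (h : NormedSpace.exp X = NormedSpace.exp Y) : X = Y := by
  letI : NormedRing M3 := Matrix.instL2OpNormedRing
  letI : NormedAlgebra ℝ M3 := Matrix.instL2OpNormedAlgebra
  have h2 := CFC.log_exp X (symm_selfAdjoint hX)
  rw [h, CFC.log_exp Y (symm_selfAdjoint hY)] at h2
  exact h2.symm

lemma exp_diag (v : Fin 3 → ℝ) :
    NormedSpace.exp (Matrix.diagonal v : M3) = Matrix.diagonal (fun i => Real.exp (v i)) := by
  rw [Matrix.exp_diagonal]
  have : NormedSpace.exp v = fun i => Real.exp (v i) := by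
    funext i
    rw [Pi.coe_exp v i, Real.exp_eq_exp_ℝ]
  rw [this]

lemma matrixLog_diag (v : Fin 3 → ℝ) (hv : ∀ i, 0 < v i) :
    matrixLog (Matrix.diagonal v) = Matrix.diagonal (fun i => Real.log (v i)) := by
  have hexp : NormedSpace.exp (Matrix.diagonal (fun i => Real.log (v i)) : M3)
      = Matrix.diagonal v := by
    rw [exp_diag]
    have : (fun i => Real.exp (Real.log (v i))) = v := funext fun i => Real.exp_log (hv i)
    rw [this]
  have hex : ∃ X : M3, X.IsSymm ∧ NormedSpace.exp X = Matrix.diagonal v :=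
    ⟨_, Matrix.isSymm_diagonal _, hexp⟩
  rw [matrixLog, dif_pos hex]
  exact exp_inj_symm hex.choose_spec.1 (Matrix.isSymm_diagonal _)
    (by rw [hex.choose_spec.2, hexp])

lemma trace_mul_transpose_self_pos (Y : M3) (hY : Y ≠ 0) : 0 < Matrix.trace (Y * Yᵀ) := by
  have htr : Matrix.trace (Y * Yᵀ) = ∑ i, ∑ j, (Y i j) ^ 2 := by
    simp [Matrix.trace, Matrix.diag, Matrix.mul_apply, sq]
  rw [htr]
  obtain ⟨i, j, hij⟩ : ∃ i j, Y i j ≠ 0 := by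
    by_contra h
    push_neg at h
    exact hY (by ext i j; simpa using h i j)
  have hpos : 0 < ∑ j, (Y i j) ^ 2 :=
    Finset.sum_pos' (fun k _ => sq_nonneg _) ⟨j, Finset.mem_univ j, by positivity⟩
  exact Finset.sum_pos' (fun k _ => Finset.sum_nonneg fun l _ => sq_nonneg _)
    ⟨i, Finset.mem_univ i, hpos⟩

/-- Monotonicity in `log V` does not imply monotonicity in `V`:
for the Hencky stress `σ(V) = 2 μ log V + λ tr(log V) 𝟙` with `μ, λ > 0` and
`2 μ (2 log 18 − (1/3) log 6) < (λ/3) log 2`, taking `V₁ = diag(3, 1/3, 1)` and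
`V₂ = diag(1, 2, 1)` one has `⟨σ(V₁) − σ(V₂), V₁ − V₂⟩ < 0`; in particular `σ` is not
Hilbert-monotone in `V`, although `X ↦ 2 μ X + λ tr(X) 𝟙` is strictly Hilbert-monotone. -/
theorem hencky_not_monotone_in_V (μ lam : ℝ) (hμ : 0 < μ) (hlam : 0 < lam)
    (hcond : 2 * μ * (2 * Real.log 18 - (1 / 3) * Real.log 6) < (lam / 3) * Real.log 2)
    (σ : M3 → M3)
    (hσ : ∀ V : M3, σ V =
      (2 * μ) • matrixLog V + (lam * Matrix.trace (matrixLog V)) • (1 : M3))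
    (V₁ V₂ : M3)
    (hV₁ : V₁ = Matrix.diagonal ![3, 1 / 3, 1])
    (hV₂ : V₂ = Matrix.diagonal ![1, 2, 1]) :
    Matrix.trace ((σ V₁ - σ V₂) * (V₁ - V₂)ᵀ) < 0 ∧
    ¬ (∀ W₁ W₂ : M3, W₁.PosDef → W₂.PosDef → W₁ ≠ W₂ →
        0 < Matrix.trace ((σ W₁ - σ W₂) * (W₁ - W₂)ᵀ)) ∧
    ∀ X₁ X₂ : M3, X₁.IsSymm → X₂.IsSymm → X₁ ≠ X₂ →
      0 < Matrix.trace
        ((((2 * μ) • X₁ + (lam * Matrix.trace X₁) • (1 : M3)) -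
          ((2 * μ) • X₂ + (lam * Matrix.trace X₂) • (1 : M3))) * (X₁ - X₂)ᵀ) := by
  have h1 : ∀ i, (0:ℝ) < ![3, 1 / 3, 1] i := by intro i; fin_cases i <;> norm_num
  have h2 : ∀ i, (0:ℝ) < ![1, 2, 1] i := by intro i; fin_cases i <;> norm_num
  have key : Matrix.trace ((σ V₁ - σ V₂) * (V₁ - V₂)ᵀ) =
      μ * ((22/3) * Real.log 3 + (10/3) * Real.log 2) - (lam/3) * Real.log 2 := by
    have expand : ∀ (A B : M3), Matrix.trace (A * Bᵀ) = ∑ i, ∑ j, A i j * B i j := by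
      intro A B
      simp only [Matrix.trace, Matrix.diag, Matrix.mul_apply, Matrix.transpose_apply]
    rw [hσ, hσ, hV₁, hV₂, matrixLog_diag _ h1, matrixLog_diag _ h2, expand]
    simp only [Matrix.trace_diagonal, Fin.sum_univ_three, Matrix.add_apply, Matrix.sub_apply,
      Matrix.smul_apply, smul_eq_mul, Matrix.one_apply, Matrix.diagonal_apply,
      Matrix.cons_val_zero, Matrix.cons_val_one, Matrix.head_cons,
      Matrix.cons_val_two, Matrix.tail_cons]
    norm_num [Fin.ext_iff]
    have hl : Real.log ((1:ℝ)/3) = - Real.log 3 := by rw [one_div, Real.log_inv]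
    rw [hl]
    ring
  have h18 : Real.log 18 = Real.log 2 + 2 * Real.log 3 := by
    rw [show (18:ℝ) = 2 * 3 ^ 2 by norm_num,
      Real.log_mul (by norm_num) (by positivity), Real.log_pow]
    push_cast
    ring
  have h6 : Real.log 6 = Real.log 2 + Real.log 3 := by
    rw [show (6:ℝ) = 2 * 3 by norm_num, Real.log_mul (by norm_num) (by norm_num)]
  rw [h18, h6] at hcond
  have part1 : Matrix.trace ((σ V₁ - σ V₂) * (V₁ - V₂)ᵀ) < 0 := by
    rw [key]
    nlinarith [hcond]
  refine ⟨part1, ?_, ?_⟩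
  · intro h
    have hne : V₁ ≠ V₂ := by
      rw [hV₁, hV₂]
      intro hEq
      have := congrFun (congrFun hEq 0) 0
      simp [Matrix.diagonal] at this
    have hpd₁ : V₁.PosDef := by
      rw [hV₁]; exact Matrix.posDef_diagonal_iff.2 h1
    have hpd₂ : V₂.PosDef := by
      rw [hV₂]; exact Matrix.posDef_diagonal_iff.2 h2
    exact absurd (h V₁ V₂ hpd₁ hpd₂ hne) (not_lt.2 part1.le)
  · intro X₁ X₂ _ _ hne
    have hY : X₁ - X₂ ≠ 0 := sub_ne_zero.mpr hne
    have hrw : ((2 * μ) • X₁ + (lam * Matrix.trace X₁) • (1 : M3)) -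
          ((2 * μ) • X₂ + (lam * Matrix.trace X₂) • (1 : M3)) =
        (2 * μ) • (X₁ - X₂) + (lam * Matrix.trace (X₁ - X₂)) • (1 : M3) := by
      rw [Matrix.trace_sub]
      rw [smul_sub, mul_sub, sub_smul]
      abel
    rw [hrw, add_mul, smul_mul_assoc, smul_mul_assoc, one_mul, Matrix.trace_add,
      Matrix.trace_smul, Matrix.trace_smul, Matrix.trace_transpose]
    have hpos := trace_mul_transpose_self_pos (X₁ - X₂) hY
    simp only [smul_eq_mul, Matrix.trace_sub]
    nlinarith [sq_nonneg (Matrix.trace X₁ - Matrix.trace X₂)]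
end
end
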